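/- For every Hermitian-preserving trace-scaling linear map D on d×d complex matrices there exist two quantum channels D_1, D_2 on d×d matrices and two real numbers c_1, c_2 such that D = c_1·D_1 + c_2·D_2. -/

import Mathlib

open Matrix
open scoped Kronecker ComplexOrder

abbrev MatC (n : Type*) := Matrix n n ℂ

/-- A linear map on matrices is Hermitian-preserving if it sends Hermitian
matrices to Hermitian matrices. -/
def IsHermitianPreserving {n : Type*} [Fintype n] [DecidableEq n]
    (M : MatC n →ₗ[ℂ] MatC n) : Prop :=
  ∀ X : MatC n, X.IsHermitian → (M X).IsHermitian

/-- A linear map on matrices is trace-scaling if it scales the trace by a fixed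
real factor. -/
def IsTraceScaling {n : Type*} [Fintype n] [DecidableEq n]
    (M : MatC n →ₗ[ℂ] MatC n) : Prop :=
  ∃ p : ℝ, ∀ X : MatC n, (M X).trace = (p : ℂ) * X.trace

/-- The Choi matrix `J_M = Σ_{i,j} |i⟩⟨j| ⊗ M(|i⟩⟨j|)` of a linear map on matrices. -/
def choi {n : Type*} [Fintype n] [DecidableEq n]
    (M : MatC n →ₗ[ℂ] MatC n) : Matrix (n × n) (n × n) ℂ :=
  Matrix.of fun p q => M (Matrix.single p.1 q.1 1) p.2 q.2

/-- A quantum channel is a completely positive (positive semidefinite Choi matrix)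
trace-preserving linear map. -/
def IsQuantumChannel {n : Type*} [Fintype n] [DecidableEq n]
    (M : MatC n →ₗ[ℂ] MatC n) : Prop :=
  (choi M).PosSemidef ∧ ∀ X : MatC n, (M X).trace = X.trace

/-- `Md` is the adjoint of `M` with respect to the Hilbert-Schmidt inner product
`⟨A, B⟩ = tr[A† B]`. -/
def IsAdjointPair {n : Type*} [Fintype n] [DecidableEq n]
    (M Md : MatC n →ₗ[ℂ] MatC n) : Prop :=
  ∀ A B : MatC n, (Aᴴ * M B).trace = ((Md A)ᴴ * B).trace

/-- A density matrix: positive semidefinite with unit trace. -/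
def IsDensityMatrix {n : Type*} [Fintype n] [DecidableEq n] (ρ : MatC n) : Prop :=
  ρ.PosSemidef ∧ ρ.trace = 1

/-- The Hermitian matrices as a real submodule of the complex matrices. -/
noncomputable def hermSubmodule (n : Type*) [Fintype n] [DecidableEq n] :
    Submodule ℝ (MatC n) :=
  selfAdjoint.submodule ℝ (MatC n)

/-- The image of the Hermitian matrices under a (complex-)linear map, as a real
submodule. -/
noncomputable def hermitianImage {n : Type*} [Fintype n] [DecidableEq n]
    (M : MatC n →ₗ[ℂ] MatC n) : Submodule ℝ (MatC n) :=
  (hermSubmodule n).map (M.restrictScalars ℝ)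

-- aux 1
lemma stdBasis_conjT {n : Type*} [DecidableEq n] (i j : n) :
    (Matrix.single i j (1:ℂ))ᴴ = Matrix.single j i 1 := by
  ext a b
  simp [Matrix.single, Matrix.conjTranspose_apply, and_comm]

lemma hp_conjT {n : Type*} [Fintype n] [DecidableEq n]
    {M : MatC n →ₗ[ℂ] MatC n} (hM : IsHermitianPreserving M) (i j : n) :
    M (Matrix.single j i 1) = (M (Matrix.single i j 1))ᴴ := by
  set E := Matrix.single i j (1:ℂ)
  set F := Matrix.single j i (1:ℂ)
  have hEF : Eᴴ = F := stdBasis_conjT i j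
  have hFE : Fᴴ = E := stdBasis_conjT j i
  have h1 : (M (E + F)).IsHermitian := by
    apply hM
    unfold Matrix.IsHermitian
    rw [Matrix.conjTranspose_add, hEF, hFE, add_comm]
  have h2 : (M (Complex.I • (E - F))).IsHermitian := by
    apply hM
    unfold Matrix.IsHermitian
    rw [Matrix.conjTranspose_smul, Matrix.conjTranspose_sub, hEF, hFE]
    simp only [Complex.star_def, Complex.conj_I, neg_smul, smul_sub]
    abel
  set A := M E
  set B := M F
  have h1' : Aᴴ + Bᴴ = A + B := by
    have := h1
    rwa [map_add, Matrix.IsHermitian, Matrix.conjTranspose_add] at this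
  have h2' : Aᴴ - Bᴴ = B - A := by
    have hh := h2
    rw [_root_.map_smul, Matrix.IsHermitian, Matrix.conjTranspose_smul, map_sub,
      Matrix.conjTranspose_sub, Complex.star_def, Complex.conj_I] at hh
    -- hh : (-I) • (Aᴴ - Bᴴ) = I • (A - B)
    have h6 := congrArg (fun Z => Complex.I • Z) hh
    simp only [smul_smul, mul_neg, Complex.I_mul_I, neg_neg, one_smul] at h6
    rw [h6, neg_one_smul]; abel
  have key : (2:ℂ) • Aᴴ = (2:ℂ) • B := by
    rw [two_smul, two_smul]
    calc Aᴴ + Aᴴ = (Aᴴ + Bᴴ) + (Aᴴ - Bᴴ) := by abel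
    _ = (A + B) + (B - A) := by rw [h1', h2']
    _ = B + B := by abel
  have := smul_right_injective (MatC n) (two_ne_zero (α := ℂ)) key
  exact this.symm

-- aux 2
lemma choi_isHermitian {n : Type*} [Fintype n] [DecidableEq n]
    {M : MatC n →ₗ[ℂ] MatC n} (hM : IsHermitianPreserving M) :
    (choi M).IsHermitian := by
  unfold Matrix.IsHermitian
  ext p q
  rw [Matrix.conjTranspose_apply]
  show star (choi M q p) = choi M p q
  unfold choi
  simp only [Matrix.of_apply]
  rw [hp_conjT hM p.1 q.1, Matrix.conjTranspose_apply, star_star]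

-- aux: real smul of PSD
lemma PosSemidef.real_smul {m : Type*} [Fintype m] {A : Matrix m m ℂ}
    (hA : A.PosSemidef) {c : ℝ} (hc : 0 ≤ c) : ((c:ℂ) • A).PosSemidef := by
  rw [Matrix.posSemidef_iff_dotProduct_mulVec]
  constructor
  · unfold Matrix.IsHermitian
    rw [Matrix.conjTranspose_smul, hA.1.eq]
    congr 1
    simp [Complex.conj_ofReal]
  · intro x
    rw [Matrix.smul_mulVec, dotProduct_smul]
    have h0 : (0:ℂ) ≤ (c:ℂ) := by
      rw [Complex.le_def]; simp [hc]
    calc (0:ℂ) = (c:ℂ) * 0 := by ring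
    _ ≤ (c:ℂ) * (dotProduct (star x) (A *ᵥ x)) :=
        mul_le_mul_of_nonneg_left (hA.dotProduct_mulVec_nonneg x) h0

-- aux: shift
lemma exists_shift {m : Type*} [Fintype m] [DecidableEq m] {H : Matrix m m ℂ}
    (hH : H.IsHermitian) :
    ∃ t₀ : ℝ, ∀ t : ℝ, t₀ ≤ t → (H + (t:ℂ) • 1).PosSemidef := by
  refine ⟨∑ i, |hH.eigenvalues i|, fun t ht => ?_⟩
  set U : Matrix m m ℂ := (hH.eigenvectorUnitary : Matrix m m ℂ) with hU
  have hUU : U * star U = 1 := (Matrix.mem_unitaryGroup_iff).mp hH.eigenvectorUnitary.2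
  have hdecomp : H + (t:ℂ) • 1 =
      U * Matrix.diagonal (fun i => ((hH.eigenvalues i + t : ℝ) : ℂ)) * star U := by
    have h1 : (t:ℂ) • (1 : Matrix m m ℂ) = U * ((t:ℂ) • 1) * star U := by
      rw [Matrix.mul_smul, Matrix.smul_mul, mul_one, hUU]
    conv_lhs => rw [hH.spectral_theorem, Unitary.conjStarAlgAut_apply, ← hU, h1]
    rw [← Matrix.add_mul, ← Matrix.mul_add]
    congr 2
    ext a b
    by_cases hab : a = b <;>
      simp [Matrix.diagonal, hab, Matrix.one_apply, Function.comp]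
  rw [hdecomp, Matrix.star_eq_conjTranspose]
  refine Matrix.PosSemidef.mul_mul_conjTranspose_same ?_ U
  refine Matrix.posSemidef_diagonal_iff.mpr fun i => ?_
  rw [Complex.zero_le_real]
  have h1 : |hH.eigenvalues i| ≤ ∑ j, |hH.eigenvalues j| :=
    Finset.single_le_sum (f := fun j => |hH.eigenvalues j|)
      (fun j _ => abs_nonneg _) (Finset.mem_univ i)
  have h2 := neg_abs_le (hH.eigenvalues i)
  linarith

-- depolarizing channel
noncomputable def depol (d : ℕ) : MatC (Fin d) →ₗ[ℂ] MatC (Fin d) where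
  toFun X := ((d:ℂ)⁻¹ * X.trace) • 1
  map_add' X Y := by
    rw [Matrix.trace_add, mul_add, add_smul]
  map_smul' c X := by
    rw [Matrix.trace_smul, RingHom.id_apply, smul_eq_mul, smul_smul]
    congr 1; ring

lemma depol_apply (d : ℕ) (X : MatC (Fin d)) :
    depol d X = ((d:ℂ)⁻¹ * X.trace) • 1 := rfl

lemma choi_depol (d : ℕ) : choi (depol d) = (Complex.ofReal ((d:ℝ)⁻¹)) • 1 := by
  ext p q
  show depol d (Matrix.single p.1 q.1 1) p.2 q.2 = ((Complex.ofReal ((d:ℝ)⁻¹)) • (1 : Matrix (Fin d × Fin d) (Fin d × Fin d) ℂ)) p q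
  rw [depol_apply]
  rcases p with ⟨p1, p2⟩; rcases q with ⟨q1, q2⟩
  by_cases h1 : p1 = q1
  · subst h1
    rw [Matrix.trace_single_eq_same]
    by_cases h2 : p2 = q2
    · subst h2
      simp [Matrix.one_apply, Complex.ofReal_inv]
    · simp [Matrix.one_apply, h2, Prod.ext_iff]
  · rw [Matrix.trace_single_eq_of_ne (h := h1)]
    simp [Matrix.one_apply, Prod.ext_iff, h1]

lemma depol_channel (d : ℕ) (hd : 0 < d) : IsQuantumChannel (depol d) := by
  constructor
  · rw [choi_depol]
    exact PosSemidef.real_smul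
      (Matrix.PosSemidef.one (n := Fin d × Fin d) (R := ℂ))
      (inv_nonneg.mpr (Nat.cast_nonneg d))
  · intro X
    have hdc : (d:ℂ) ≠ 0 := Nat.cast_ne_zero.mpr hd.ne'
    rw [depol_apply, Matrix.trace_smul, Matrix.trace_one, smul_eq_mul]
    simp only [Fintype.card_fin]
    field_simp

-- choi is linear in the map
lemma choi_add {n : Type*} [Fintype n] [DecidableEq n] (M N : MatC n →ₗ[ℂ] MatC n) :
    choi (M + N) = choi M + choi N := by
  ext p q; simp [choi]

lemma choi_smul {n : Type*} [Fintype n] [DecidableEq n] (c : ℂ) (M : MatC n →ₗ[ℂ] MatC n) :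
    choi (c • M) = c • choi M := by
  ext p q; simp [choi]


/-- Any Hermitian-preserving trace-scaling map is a real linear combination of
two quantum channels. -/
theorem stmt3 (d : ℕ) (D : MatC (Fin d) →ₗ[ℂ] MatC (Fin d))
    (hHP : IsHermitianPreserving D) (hTS : IsTraceScaling D) :
    ∃ (c₁ c₂ : ℝ) (D₁ D₂ : MatC (Fin d) →ₗ[ℂ] MatC (Fin d)),
      IsQuantumChannel D₁ ∧ IsQuantumChannel D₂ ∧
      D = (c₁ : ℂ) • D₁ + (c₂ : ℂ) • D₂ := by
  rcases Nat.eq_zero_or_pos d with hd | hd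
  · subst hd
    have hch : IsQuantumChannel (LinearMap.id : MatC (Fin 0) →ₗ[ℂ] MatC (Fin 0)) := by
      refine ⟨⟨?_, ?_⟩, fun X => rfl⟩
      · ext ⟨⟨i, hi⟩, j⟩ q
        exact absurd hi (Nat.not_lt_zero i)
      · intro x
        simp [Subsingleton.elim x 0]
    refine ⟨0, 0, LinearMap.id, LinearMap.id, hch, hch, ?_⟩
    apply LinearMap.ext; intro X
    funext i j
    exact absurd i.2 (Nat.not_lt_zero i.1)
  · obtain ⟨p, hp⟩ := hTS
    have hJ := choi_isHermitian hHP
    obtain ⟨t₀, hshift⟩ := exists_shift hJ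
    set t : ℝ := max t₀ (|p| + 1) with htdef
    have htt₀ : t₀ ≤ t := le_max_left _ _
    have htp : |p| + 1 ≤ t := le_max_right _ _
    have hd1 : (1:ℝ) ≤ (d:ℝ) := by exact_mod_cast hd
    have htpos : 0 < t := lt_of_lt_of_le (by positivity) htp
    set s : ℝ := p + d * t with hsdef
    have hspos : 0 < s := by nlinarith [abs_nonneg p, neg_abs_le p]
    have hsne : (s:ℂ) ≠ 0 := Complex.ofReal_ne_zero.mpr hspos.ne'
    have hdne : (d:ℂ) ≠ 0 := Nat.cast_ne_zero.mpr hd.ne'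
    set Λ := depol d with hΛdef
    set c : ℂ := Complex.ofReal (d * t) with hcdef
    set D₁ := (Complex.ofReal s)⁻¹ • (D + c • Λ) with hD₁
    have hΛch := depol_channel d hd
    have hchoi₁ : choi D₁ = (Complex.ofReal s)⁻¹ • (choi D + Complex.ofReal t • 1) := by
      rw [hD₁, choi_smul, choi_add, choi_smul, choi_depol]
      congr 2
      rw [smul_smul, hcdef]
      push_cast
      congr 1
      field_simp
    refine ⟨s, -(d*t), D₁, Λ, ⟨?_, ?_⟩, hΛch, ?_⟩
    · rw [hchoi₁]
      have h1 : (choi D + Complex.ofReal t • 1).PosSemidef := hshift t htt₀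
      have h2 := PosSemidef.real_smul h1 (c := s⁻¹) (inv_nonneg.mpr hspos.le)
      rwa [Complex.ofReal_inv] at h2
    · intro X
      rw [hD₁]
      simp only [LinearMap.smul_apply, LinearMap.add_apply, Matrix.trace_smul,
        Matrix.trace_add, smul_eq_mul]
      rw [hp, hΛch.2]
      have hsum : (p:ℂ) * X.trace + c * X.trace = (s:ℂ) * X.trace := by
        rw [hcdef, hsdef]; push_cast; ring
      rw [hsum, inv_mul_cancel_left₀ hsne]
    · rw [hD₁, smul_smul, mul_inv_cancel₀ hsne, one_smul, Complex.ofReal_neg, ← hcdef]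
      module
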